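/- For r ∈ (0,1), ∫_{−1}^{0} dz / √((−z)(r−z)(1−rz)) = K(√(1−r²)), where K is the complete elliptic integral of the first kind. -/

import Mathlib

open Real intervalIntegral

/-- The complete elliptic integral of the first kind. -/
noncomputable def ellK (k : ℝ) : ℝ :=
  ∫ t in (0:ℝ)..(Real.pi / 2), 1 / Real.sqrt (1 - k ^ 2 * Real.sin t ^ 2)

namespace Stmt5Aux

open MeasureTheory Filter Set

/-- Key limit tool: equality of integrals proved on subintervals passes to the limit. -/
lemma key_subst (f g φ : ℝ → ℝ) (B : ℝ) (hB : 0 < B)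
    (hg : IntervalIntegrable g volume 0 B)
    (hf : IntervalIntegrable f volume (φ 0) (φ B))
    (hφc : ContinuousOn φ (Set.Icc 0 B))
    (hmap : Set.MapsTo φ (Set.Icc 0 B) (Set.uIcc (φ 0) (φ B)))
    (heq : ∀ u ∈ Set.Ico 0 B, (∫ x in (0:ℝ)..u, g x) = ∫ x in (φ 0)..(φ u), f x) :
    (∫ x in (0:ℝ)..B, g x) = ∫ x in (φ 0)..(φ B), f x := by
  have hIcc : Set.uIcc (0:ℝ) B = Set.Icc 0 B := Set.uIcc_of_le hB.le
  have hBmem : B ∈ Set.Icc (0:ℝ) B := ⟨hB.le, le_refl B⟩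
  haveI hne : (nhdsWithin B (Set.Ico 0 B)).NeBot := right_nhdsWithin_Ico_neBot hB
  have hFc : ContinuousOn (fun u => ∫ x in (0:ℝ)..u, g x) (Set.Icc 0 B) := by
    have := intervalIntegral.continuousOn_primitive_interval'
      (μ := volume) (b₁ := (0:ℝ)) (b₂ := B) hg Set.left_mem_uIcc
    rwa [hIcc] at this
  have hF : Tendsto (fun u => ∫ x in (0:ℝ)..u, g x) (nhdsWithin B (Set.Ico 0 B))
      (nhds (∫ x in (0:ℝ)..B, g x)) :=
    ((hFc B hBmem).tendsto).mono_left (nhdsWithin_mono B Set.Ico_subset_Icc_self)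
  have hGc : ContinuousOn (fun y => ∫ x in (φ 0)..y, f x) (Set.uIcc (φ 0) (φ B)) :=
    intervalIntegral.continuousOn_primitive_interval' hf Set.left_mem_uIcc
  have hφB : Tendsto φ (nhdsWithin B (Set.Ico 0 B)) (nhdsWithin (φ B) (Set.uIcc (φ 0) (φ B))) := by
    apply tendsto_nhdsWithin_of_tendsto_nhds_of_eventually_within
    · exact ((hφc B hBmem).tendsto).mono_left (nhdsWithin_mono B Set.Ico_subset_Icc_self)
    · exact eventually_nhdsWithin_of_forall (fun x hx => hmap (Set.Ico_subset_Icc_self hx))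
  have hG : Tendsto (fun u => ∫ x in (φ 0)..(φ u), f x) (nhdsWithin B (Set.Ico 0 B))
      (nhds (∫ x in (φ 0)..(φ B), f x)) :=
    ((hGc (φ B) Set.right_mem_uIcc).tendsto).comp hφB
  exact tendsto_nhds_unique (hF.congr' (eventually_nhdsWithin_of_forall heq)) hG

lemma integrable_of_bound (f : ℝ → ℝ) (a c C : ℝ) (hac : a < c)
    (hm : AEStronglyMeasurable f (volume.restrict (Set.uIoc a c)))
    (hb : ∀ x ∈ Set.Ioc a c, |f x| ≤ C * (c - x) ^ (-(1/2):ℝ)) :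
    IntervalIntegrable f volume a c := by
  have hbase : IntervalIntegrable (fun x => C * (c - x) ^ (-(1/2):ℝ)) volume a c := by
    have h1 : IntervalIntegrable (fun x : ℝ => x ^ (-(1/2):ℝ)) volume (c - a) 0 :=
      intervalIntegral.intervalIntegrable_rpow' (by norm_num)
    have h2 := h1.comp_sub_left c
    simp only [sub_sub_cancel, sub_zero] at h2
    exact h2.const_mul C
  refine hbase.mono_fun' hm ?_
  have huIoc : Set.uIoc a c = Set.Ioc a c := Set.uIoc_of_le hac.le
  rw [Filter.EventuallyLE, huIoc, ae_restrict_iff' measurableSet_Ioc]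
  filter_upwards with x hx
  simpa [Real.norm_eq_abs] using hb x hx

lemma div_sqrt_le (n D P cx : ℝ) (hn : 0 ≤ n) (hD : 0 < D) (hcx : 0 < cx)
    (h : D * cx ≤ P) :
    n / Real.sqrt P ≤ (n / Real.sqrt D) * cx ^ (-(1/2):ℝ) := by
  have h1 : Real.sqrt D * Real.sqrt cx ≤ Real.sqrt P := by
    rw [← Real.sqrt_mul hD.le]; exact Real.sqrt_le_sqrt h
  have h2 : 0 < Real.sqrt D * Real.sqrt cx :=
    mul_pos (Real.sqrt_pos.2 hD) (Real.sqrt_pos.2 hcx)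
  have h3 : n / Real.sqrt P ≤ n / (Real.sqrt D * Real.sqrt cx) :=
    div_le_div_of_nonneg_left hn h2 h1
  refine h3.trans_eq ?_
  rw [Real.rpow_neg hcx.le, ← Real.sqrt_eq_rpow]
  ring

lemma hA_pos (r x : ℝ) (hr0 : 0 < r) (hx2 : x^2 ≤ 1) :
    (0:ℝ) < (1+r)^2 - (1-r)^2 * x^2 := by
  have h2 : (1-r)^2 * x^2 ≤ (1-r)^2 * 1 :=
    mul_le_mul_of_nonneg_left hx2 (sq_nonneg _)
  nlinarith

lemma idA (r x : ℝ) (hr0 : 0 < r) (hr1 : r < 1) (hx0 : 0 ≤ x) (hx1 : x < 1) :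
    (2/(x+1)^2) * (1 / Real.sqrt ((-((x-1)/(x+1))) * (r - (x-1)/(x+1)) * (1 - r * ((x-1)/(x+1))))) =
    2 / Real.sqrt ((1 - x^2) * ((1+r)^2 - (1-r)^2 * x^2)) := by
  have hx1' : (0:ℝ) < x + 1 := by linarith
  have hA : (0:ℝ) < (1+r)^2 - (1-r)^2 * x^2 := hA_pos r x hr0 (by nlinarith)
  have hN : (0:ℝ) < (1 - x^2) * ((1+r)^2 - (1-r)^2 * x^2) :=
    mul_pos (by nlinarith) hA
  have hQ : (-((x-1)/(x+1))) * (r - (x-1)/(x+1)) * (1 - r * ((x-1)/(x+1)))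
      = ((1 - x^2) * ((1+r)^2 - (1-r)^2 * x^2)) / (x+1)^4 := by
    field_simp
    ring
  rw [hQ, Real.sqrt_div hN.le, show (x+1)^4 = ((x+1)^2)^2 by ring,
    Real.sqrt_sq (by positivity)]
  have hs : Real.sqrt ((1 - x^2) * ((1+r)^2 - (1-r)^2 * x^2)) ≠ 0 :=
    (Real.sqrt_pos.mpr hN).ne'
  field_simp

lemma idC (r t m : ℝ) (hr0 : 0 < r) (hr1 : r < 1) (ht0 : 0 ≤ t) (ht1 : t < 1)
    (hm : m = (1-r)/(1+r)) :
    ((1+m)*(1-m*t^2)/(1+m*t^2)^2) *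
      (1 / Real.sqrt ((1 - ((1+m)*t/(1+m*t^2))^2) *
        (1 - (1-r^2) * ((1+m)*t/(1+m*t^2))^2))) =
    2 / Real.sqrt ((1-t^2) * ((1+r)^2 - (1-r)^2*t^2)) := by
  have hr1' : (0:ℝ) < 1 + r := by linarith
  have hm0 : 0 < m := by rw [hm]; exact div_pos (by linarith) hr1'
  have hm1 : m < 1 := by rw [hm, div_lt_one hr1']; linarith
  have hb : 1 - r = m*(1+r) := by rw [hm]; field_simp
  have hk2 : 1 - r^2 = 4*m/(1+m)^2 := by rw [hm]; field_simp; ring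
  have h2 : (1+m)*(1+r) = 2 := by rw [hm]; field_simp; ring
  have ht2 : t^2 < 1 := by nlinarith
  have hs : (0:ℝ) < 1 + m*t^2 := by nlinarith
  have hd : (0:ℝ) < 1 - m*t^2 := by nlinarith
  have hm2t : m^2*t^2 < 1 := by nlinarith
  have hN' : (0:ℝ) < (1-t^2) * (1-m^2*t^2) := mul_pos (by nlinarith) (by nlinarith)
  have hAm : (1+r)^2 - (1-r)^2*t^2 = (1+r)^2*(1-m^2*t^2) := by rw [hb]; ring
  have hE : (1 - ((1+m)*t/(1+m*t^2))^2) * (1 - (1-r^2) * ((1+m)*t/(1+m*t^2))^2)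
      = ((1-t^2) * (1-m^2*t^2)) * ((1-m*t^2)/(1+m*t^2)^2)^2 := by
    rw [hk2]
    have h1m : (0:ℝ) < 1 + m := by linarith
    field_simp
    ring
  have e1 : Real.sqrt (((1-t^2)*(1-m^2*t^2)) * ((1-m*t^2)/(1+m*t^2)^2)^2)
      = Real.sqrt ((1-t^2)*(1-m^2*t^2)) * ((1-m*t^2)/(1+m*t^2)^2) := by
    rw [Real.sqrt_mul hN'.le, Real.sqrt_sq (by positivity)]
  have e2 : Real.sqrt ((1-t^2) * ((1+r)^2*(1-m^2*t^2)))
      = (1+r) * Real.sqrt ((1-t^2)*(1-m^2*t^2)) := by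
    rw [show (1-t^2) * ((1+r)^2*(1-m^2*t^2)) = (1+r)^2 * ((1-t^2)*(1-m^2*t^2)) by ring,
      Real.sqrt_mul (sq_nonneg _), Real.sqrt_sq hr1'.le]
  rw [hE, e1, hAm, e2]
  have hsN : Real.sqrt ((1-t^2) * (1-m^2*t^2)) ≠ 0 := (Real.sqrt_pos.mpr hN').ne'
  field_simp
  linear_combination h2

section Chains

variable {r : ℝ}

/-- Integrability of the gg integrand on [0,1]. -/
lemma int_gg (hr0 : 0 < r) (hr1 : r < 1) :
    IntervalIntegrable (fun t => 2 / Real.sqrt ((1 - t^2) * ((1+r)^2 - (1-r)^2 * t^2)))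
      volume 0 1 := by
  apply integrable_of_bound _ _ _ (2 / Real.sqrt (4*r)) one_pos
  · exact (Measurable.div measurable_const
      ((Real.continuous_sqrt.comp (by fun_prop)).measurable)).aestronglyMeasurable
  · intro x hx
    rcases eq_or_lt_of_le hx.2 with h1 | h1
    · rw [h1]
      norm_num
    · rw [abs_of_nonneg (by positivity)]
      have hx2 : x^2 ≤ 1 := by nlinarith [hx.1.le]
      have hA : (4:ℝ)*r ≤ (1+r)^2 - (1-r)^2 * x^2 := by
        nlinarith [mul_le_mul_of_nonneg_left hx2 (sq_nonneg (1-r))]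
      have hxx : 1 - x ≤ 1 - x^2 := by nlinarith [hx.1.le]
      have hkey : (4*r) * (1 - x) ≤ (1 - x^2) * ((1+r)^2 - (1-r)^2 * x^2) := by
        calc (4*r)*(1-x) ≤ ((1+r)^2-(1-r)^2*x^2)*(1-x) :=
              mul_le_mul_of_nonneg_right hA (by linarith)
          _ ≤ ((1+r)^2-(1-r)^2*x^2)*(1-x^2) :=
              mul_le_mul_of_nonneg_left hxx (by linarith)
          _ = (1-x^2)*((1+r)^2-(1-r)^2*x^2) := mul_comm _ _
      exact div_sqrt_le 2 (4*r) _ (1-x) (by norm_num) (by linarith) (by linarith) hkey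

/-- Integrability of the hh integrand on [0,1]. -/
lemma int_hh (hr0 : 0 < r) (hr1 : r < 1) :
    IntervalIntegrable (fun x => 1 / Real.sqrt ((1 - x^2) * (1 - (1-r^2) * x^2)))
      volume 0 1 := by
  apply integrable_of_bound _ _ _ (1 / Real.sqrt (r^2)) one_pos
  · exact (Measurable.div measurable_const
      ((Real.continuous_sqrt.comp (by fun_prop)).measurable)).aestronglyMeasurable
  · intro x hx
    rcases eq_or_lt_of_le hx.2 with h1 | h1
    · rw [h1]
      norm_num
    · rw [abs_of_nonneg (by positivity)]
      have hx2 : x^2 ≤ 1 := by nlinarith [hx.1.le]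
      have hA : r^2 ≤ 1 - (1-r^2) * x^2 := by
        nlinarith [mul_le_mul_of_nonneg_left hx2 (by nlinarith : (0:ℝ) ≤ 1 - r^2)]
      have hxx : 1 - x ≤ 1 - x^2 := by nlinarith [hx.1.le]
      have hkey : r^2 * (1 - x) ≤ (1 - x^2) * (1 - (1-r^2) * x^2) := by
        calc r^2*(1-x) ≤ (1-(1-r^2)*x^2)*(1-x) :=
              mul_le_mul_of_nonneg_right hA (by linarith)
          _ ≤ (1-(1-r^2)*x^2)*(1-x^2) :=
              mul_le_mul_of_nonneg_left hxx (by nlinarith)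
          _ = (1-x^2)*(1-(1-r^2)*x^2) := mul_comm _ _
      exact div_sqrt_le 1 (r^2) _ (1-x) (by norm_num) (by positivity) (by linarith) hkey

/-- Integrability of the f0 integrand on [-1,0]. -/
lemma int_f0 (hr0 : 0 < r) (hr1 : r < 1) :
    IntervalIntegrable (fun z => 1 / Real.sqrt ((-z) * (r - z) * (1 - r * z)))
      volume (-1) 0 := by
  apply integrable_of_bound _ _ _ (1 / Real.sqrt r) (by norm_num)
  · exact (Measurable.div measurable_const
      ((Real.continuous_sqrt.comp (by fun_prop)).measurable)).aestronglyMeasurable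
  · intro z hz
    rcases eq_or_lt_of_le hz.2 with h1 | h1
    · rw [h1]
      norm_num
    · rw [abs_of_nonneg (by positivity)]
      have h2 : r ≤ (r - z) * (1 - r * z) := by nlinarith [hz.1, mul_pos hr0 (neg_pos.2 h1)]
      have hkey : r * (0 - z) ≤ (-z) * (r - z) * (1 - r * z) := by
        have := mul_le_mul_of_nonneg_left h2 (by linarith : (0:ℝ) ≤ -z)
        nlinarith [this]
      exact div_sqrt_le 1 r _ (0 - z) (by norm_num) hr0 (by linarith) hkey

lemma chainA (hr0 : 0 < r) (hr1 : r < 1) :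
    (∫ t in (0:ℝ)..1, 2 / Real.sqrt ((1 - t^2) * ((1+r)^2 - (1-r)^2 * t^2)))
      = ∫ z in (-1:ℝ)..0, 1 / Real.sqrt ((-z) * (r - z) * (1 - r * z)) := by
  have e0 : ((0:ℝ)-1)/(0+1) = -1 := by norm_num
  have e1 : ((1:ℝ)-1)/(1+1) = 0 := by norm_num
  have h := key_subst (fun z => 1 / Real.sqrt ((-z) * (r - z) * (1 - r * z)))
      (fun t => 2 / Real.sqrt ((1 - t^2) * ((1+r)^2 - (1-r)^2 * t^2)))
      (fun t => (t-1)/(t+1)) 1 one_pos (int_gg hr0 hr1) ?_ ?_ ?_ ?_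
  · rw [e0, e1] at h
    exact h
  · rw [e0, e1]
    exact int_f0 hr0 hr1
  · apply ContinuousOn.div (by fun_prop) (by fun_prop)
    intro x hx
    have := hx.1
    positivity
  · intro x hx
    rw [e0, e1, Set.uIcc_of_le (by norm_num : (-1:ℝ) ≤ 0)]
    have hx1 : (0:ℝ) < x + 1 := by linarith [hx.1]
    constructor
    · rw [le_div_iff₀ hx1]
      linarith [hx.1]
    · exact div_nonpos_of_nonpos_of_nonneg (by linarith [hx.2]) (by linarith [hx.1])
  · intro u hu
    obtain ⟨hu0, hu1⟩ := hu
    have hderiv : ∀ x ∈ Set.uIcc (0:ℝ) u, HasDerivAt (fun t:ℝ => (t-1)/(t+1)) (2/(x+1)^2) x := by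
      intro x hx
      rw [Set.uIcc_of_le hu0] at hx
      have hx1 : (0:ℝ) < x + 1 := by linarith [hx.1]
      have h := ((hasDerivAt_id x).sub_const 1).div ((hasDerivAt_id x).add_const 1) hx1.ne'
      refine HasDerivAt.congr_deriv h ?_
      simp only [id_eq]
      ring
    have hcont' : ContinuousOn (fun x:ℝ => 2/(x+1)^2) (Set.uIcc (0:ℝ) u) := by
      rw [Set.uIcc_of_le hu0]
      apply ContinuousOn.div continuousOn_const (by fun_prop)
      intro x hx
      have := hx.1
      positivity
    have hψu : ((u-1)/(u+1) : ℝ) < 0 := div_neg_of_neg_of_pos (by linarith) (by linarith)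
    have himg : (fun t:ℝ => (t-1)/(t+1)) '' (Set.uIcc 0 u) ⊆ Set.Icc (-1:ℝ) ((u-1)/(u+1)) := by
      rw [Set.uIcc_of_le hu0]
      rintro y ⟨x, hx, rfl⟩
      have hx1 : (0:ℝ) < x+1 := by linarith [hx.1]
      constructor
      · rw [le_div_iff₀ hx1]
        linarith [hx.1]
      · rw [div_le_div_iff₀ hx1 (by linarith : (0:ℝ) < u+1)]
        nlinarith [hx.2]
    have hcontf : ContinuousOn (fun z => 1 / Real.sqrt ((-z) * (r - z) * (1 - r * z)))
        ((fun t:ℝ => (t-1)/(t+1)) '' Set.uIcc 0 u) := by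
      apply ContinuousOn.mono ?_ himg
      apply ContinuousOn.div continuousOn_const
        (Real.continuous_sqrt.comp_continuousOn (by fun_prop))
      intro z hz
      have h1 : 0 < -z := by linarith [hz.2, hψu]
      have h2 : 0 < r - z := by linarith
      have h3 : 0 < 1 - r*z := by nlinarith [mul_pos hr0 h1]
      exact (Real.sqrt_pos.mpr (by positivity)).ne'
    have hsub := intervalIntegral.integral_comp_smul_deriv' hderiv hcont' hcontf
    rw [← hsub]
    apply intervalIntegral.integral_congr
    intro x hx
    rw [Set.uIcc_of_le hu0] at hx
    have hid := idA r x hr0 hr1 hx.1 (lt_of_le_of_lt hx.2 hu1)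
    simpa [smul_eq_mul] using hid.symm

lemma cont_hh (hr0 : 0 < r) (hr1 : r < 1) {c : ℝ} (hc : c < 1) :
    ContinuousOn (fun x => 1 / Real.sqrt ((1 - x^2) * (1 - (1-r^2) * x^2))) (Set.Icc 0 c) := by
  apply ContinuousOn.div continuousOn_const
    (Real.continuous_sqrt.comp_continuousOn (by fun_prop))
  intro x hx
  have hx2 : x^2 < 1 := by nlinarith [hx.1, hx.2]
  have h2 : 0 < 1 - (1-r^2)*x^2 := by nlinarith [sq_nonneg (r*x)]
  exact (Real.sqrt_pos.mpr (mul_pos (by nlinarith) h2)).ne'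

lemma chainC (hr0 : 0 < r) (hr1 : r < 1) :
    (∫ t in (0:ℝ)..1, 2 / Real.sqrt ((1 - t^2) * ((1+r)^2 - (1-r)^2 * t^2)))
      = ∫ x in (0:ℝ)..1, 1 / Real.sqrt ((1 - x^2) * (1 - (1-r^2) * x^2)) := by
  set m : ℝ := (1-r)/(1+r) with hm
  have hr1' : (0:ℝ) < 1+r := by linarith
  have hm0 : 0 < m := div_pos (by linarith) hr1'
  have hm1 : m < 1 := by rw [hm, div_lt_one hr1']; linarith
  have e0 : (1+m)*0/(1+m*0^2) = 0 := by norm_num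
  have e1 : (1+m)*1/(1+m*1^2) = 1 := by
    rw [mul_one, one_pow, mul_one, div_self (by linarith : (1:ℝ)+m ≠ 0)]
  have hspos : ∀ x : ℝ, 0 < 1 + m*x^2 := fun x => by
    nlinarith [mul_nonneg hm0.le (sq_nonneg x)]
  have h := key_subst (fun x => 1 / Real.sqrt ((1 - x^2) * (1 - (1-r^2) * x^2)))
      (fun t => 2 / Real.sqrt ((1 - t^2) * ((1+r)^2 - (1-r)^2 * t^2)))
      (fun t => (1+m)*t/(1+m*t^2)) 1 one_pos (int_gg hr0 hr1) ?_ ?_ ?_ ?_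
  · rw [e0, e1] at h
    exact h
  · rw [e0, e1]
    exact int_hh hr0 hr1
  · apply ContinuousOn.div (by fun_prop) (by fun_prop)
    intro x _
    exact (hspos x).ne'
  · intro x hx
    rw [e0, e1, Set.uIcc_of_le (by norm_num : (0:ℝ) ≤ 1)]
    have hs := hspos x
    constructor
    · exact div_nonneg (mul_nonneg (by linarith) hx.1) hs.le
    · rw [div_le_one hs]
      have h1 : 0 ≤ (1-x)*(1-m*x) := by
        have : m*x ≤ m := by nlinarith [hx.1, hx.2]
        exact mul_nonneg (by linarith [hx.2]) (by linarith)
      nlinarith [h1]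
  · intro u hu
    obtain ⟨hu0, hu1⟩ := hu
    have hsu := hspos u
    have hderiv : ∀ x ∈ Set.uIcc (0:ℝ) u,
        HasDerivAt (fun t:ℝ => (1+m)*t/(1+m*t^2)) ((1+m)*(1-m*x^2)/(1+m*x^2)^2) x := by
      intro x _
      have hs := hspos x
      have h1 : HasDerivAt (fun t:ℝ => (1+m)*t) (1+m) x := by
        simpa using (hasDerivAt_id x).const_mul (1+m)
      have h2 : HasDerivAt (fun t:ℝ => 1+m*t^2) (m*(2*x)) x := by
        have h3 := ((hasDerivAt_pow 2 x).const_mul m).const_add 1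
        simpa using h3
      have h := h1.div h2 hs.ne'
      refine HasDerivAt.congr_deriv h ?_
      ring
    have hcont' : ContinuousOn (fun x:ℝ => (1+m)*(1-m*x^2)/(1+m*x^2)^2)
        (Set.uIcc (0:ℝ) u) := by
      apply ContinuousOn.div (by fun_prop) (by fun_prop)
      intro x _
      exact pow_ne_zero 2 (hspos x).ne'
    have hφu1 : (1+m)*u/(1+m*u^2) < 1 := by
      rw [div_lt_one hsu]
      have h1 : 0 < (1-u)*(1-m*u) := by
        have : m*u ≤ m := by nlinarith [hu0]
        exact mul_pos (by linarith) (by linarith)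
      nlinarith [h1]
    have himg : (fun t:ℝ => (1+m)*t/(1+m*t^2)) '' (Set.uIcc 0 u)
        ⊆ Set.Icc 0 ((1+m)*u/(1+m*u^2)) := by
      rw [Set.uIcc_of_le hu0]
      rintro y ⟨x, hx, rfl⟩
      have hs := hspos x
      constructor
      · exact div_nonneg (mul_nonneg (by linarith) hx.1) hs.le
      · rw [div_le_div_iff₀ hs hsu]
        have h1 : u*x ≤ 1 := by nlinarith [mul_le_mul_of_nonneg_left hx.2 hu0, hu1.le]
        have hfac : 0 ≤ ((1+m)*(u-x))*(1-m*(u*x)) := by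
          have h2 : m*(u*x) ≤ m*1 := mul_le_mul_of_nonneg_left h1 hm0.le
          exact mul_nonneg (mul_nonneg (by linarith) (by linarith [hx.2])) (by linarith)
        nlinarith [hfac]
    have hcontf : ContinuousOn (fun x => 1 / Real.sqrt ((1 - x^2) * (1 - (1-r^2) * x^2)))
        ((fun t:ℝ => (1+m)*t/(1+m*t^2)) '' Set.uIcc 0 u) :=
      (cont_hh hr0 hr1 hφu1).mono himg
    have hsub := intervalIntegral.integral_comp_smul_deriv' hderiv hcont' hcontf
    rw [← hsub]
    apply intervalIntegral.integral_congr
    intro x hx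
    rw [Set.uIcc_of_le hu0] at hx
    have hid := idC r x m hr0 hr1 hx.1 (lt_of_le_of_lt hx.2 hu1) hm
    simpa [smul_eq_mul] using hid.symm

lemma chainB (hr0 : 0 < r) (hr1 : r < 1) :
    (∫ θ in (0:ℝ)..(Real.pi/2), 1 / Real.sqrt (1 - (1-r^2) * Real.sin θ ^ 2))
      = ∫ x in (0:ℝ)..1, 1 / Real.sqrt ((1 - x^2) * (1 - (1-r^2) * x^2)) := by
  have hπ : (0:ℝ) < Real.pi/2 := by positivity
  have e0 : Real.sin 0 = 0 := Real.sin_zero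
  have e1 : Real.sin (Real.pi/2) = 1 := Real.sin_pi_div_two
  have h := key_subst (fun x => 1 / Real.sqrt ((1 - x^2) * (1 - (1-r^2) * x^2)))
      (fun θ => 1 / Real.sqrt (1 - (1-r^2) * Real.sin θ ^ 2))
      Real.sin (Real.pi/2) hπ ?_ ?_ ?_ ?_ ?_
  · rw [e0, e1] at h
    exact h
  · apply Continuous.intervalIntegrable
    apply Continuous.div continuous_const
      (Real.continuous_sqrt.comp (by fun_prop))
    intro θ
    show Real.sqrt (1 - (1-r^2) * Real.sin θ ^ 2) ≠ 0
    have h1 : Real.sin θ ^ 2 ≤ 1 := Real.sin_sq_le_one θ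
    exact (Real.sqrt_pos.mpr (by nlinarith [sq_nonneg (r * Real.sin θ)])).ne'
  · rw [e0, e1]
    exact int_hh hr0 hr1
  · exact Real.continuous_sin.continuousOn
  · intro x hx
    rw [e0, e1, Set.uIcc_of_le (by norm_num : (0:ℝ) ≤ 1)]
    refine ⟨Real.sin_nonneg_of_nonneg_of_le_pi hx.1 ?_, Real.sin_le_one x⟩
    linarith [Real.pi_pos, hx.2]
  · intro u hu
    obtain ⟨hu0, hu1⟩ := hu
    have hderiv : ∀ x ∈ Set.uIcc (0:ℝ) u, HasDerivAt Real.sin (Real.cos x) x :=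
      fun x _ => Real.hasDerivAt_sin x
    have hsinu : Real.sin u < 1 := by
      have h2 := Real.strictMonoOn_sin
        ⟨by linarith [Real.pi_pos], hu1.le⟩
        ⟨by linarith [Real.pi_pos], le_refl _⟩ hu1
      rwa [Real.sin_pi_div_two] at h2
    have himg : Real.sin '' (Set.uIcc 0 u) ⊆ Set.Icc 0 (Real.sin u) := by
      rw [Set.uIcc_of_le hu0]
      rintro y ⟨x, hx, rfl⟩
      refine ⟨Real.sin_nonneg_of_nonneg_of_le_pi hx.1 ?_, ?_⟩
      · linarith [Real.pi_pos, hx.2, hu1]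
      · exact Real.strictMonoOn_sin.monotoneOn
          ⟨by linarith [Real.pi_pos, hx.1], by linarith [hx.2, hu1.le]⟩
          ⟨by linarith [Real.pi_pos], by linarith [hu1.le]⟩ hx.2
    have hcontf : ContinuousOn (fun x => 1 / Real.sqrt ((1 - x^2) * (1 - (1-r^2) * x^2)))
        (Real.sin '' Set.uIcc 0 u) :=
      (cont_hh hr0 hr1 hsinu).mono himg
    have hsub := intervalIntegral.integral_comp_smul_deriv' hderiv
      Real.continuous_cos.continuousOn hcontf
    rw [← hsub]
    apply intervalIntegral.integral_congr
    intro θ hθ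
    rw [Set.uIcc_of_le hu0] at hθ
    have hθ2 : θ < Real.pi/2 := lt_of_le_of_lt hθ.2 hu1
    have hcos : 0 < Real.cos θ :=
      Real.cos_pos_of_mem_Ioo ⟨by linarith [Real.pi_pos, hθ.1], hθ2⟩
    have hX : 0 < 1 - (1-r^2) * Real.sin θ ^ 2 := by
      nlinarith [Real.sin_sq_le_one θ, sq_nonneg (r * Real.sin θ)]
    show 1 / Real.sqrt (1 - (1-r^2) * Real.sin θ ^ 2)
        = Real.cos θ • (1 / Real.sqrt ((1 - Real.sin θ ^ 2) * (1 - (1-r^2) * Real.sin θ ^ 2)))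
    rw [smul_eq_mul, ← Real.cos_sq', Real.sqrt_mul (sq_nonneg _), Real.sqrt_sq hcos.le]
    have hs : Real.sqrt (1 - (1-r^2) * Real.sin θ ^ 2) ≠ 0 := (Real.sqrt_pos.mpr hX).ne'
    field_simp

end Chains

end Stmt5Aux

/-- For r ∈ (0,1), ∫_{−1}^{0} dz/√((−z)(r−z)(1−rz)) = K(√(1−r²)). -/
theorem stmt5 (r : ℝ) (hr : r ∈ Set.Ioo (0 : ℝ) 1) :
    (∫ z in (-1 : ℝ)..0, 1 / Real.sqrt ((-z) * (r - z) * (1 - r * z))) =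
      ellK (Real.sqrt (1 - r ^ 2)) := by
  obtain ⟨hr0, hr1⟩ := hr
  rw [← Stmt5Aux.chainA hr0 hr1, Stmt5Aux.chainC hr0 hr1, ← Stmt5Aux.chainB hr0 hr1]
  simp only [ellK, Real.sq_sqrt (by nlinarith : (0:ℝ) ≤ 1 - r ^ 2)]
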